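/- Suppose the discount function satisfies δ(i)δ(j) ≤ δ(i+j) for all i,j ∈ ℕ. Then for any nonempty Borel set S ⊆ 𝕏 with Θ(S) ⊆ S, one has J(x, ρ(x,S)) ≤ J(x, ρ(x,Θ(S))) for all x ∈ 𝕏; in particular, Θ²(S) ⊆ Θ(S). -/

import Mathlib

open MeasureTheory ProbabilityTheory Set Filter Topology
open scoped ENNReal ENat

noncomputable section

/-- The σ-algebra generated by the first `n+1` coordinates of the path space:
the natural filtration of the coordinate process at time `n`. -/
def pathSigma (𝕏 : Type*) [m : MeasurableSpace 𝕏] (n : ℕ) : MeasurableSpace (ℕ → 𝕏) :=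
  ⨆ i ∈ Finset.range (n + 1), MeasurableSpace.comap (fun ω : ℕ → 𝕏 => ω i) m

/-- `Pr` is the family of laws of the time-homogeneous Markov chain with one-step
transition kernel `Q`: under `Pr x` the chain starts at `x`, and the Markov property
`Pr^x(X_{n+1} ∈ A | 𝓕_n) = Q(X_n, A)` holds. -/
structure IsMarkovChainLaw {𝕏 : Type*} [MeasurableSpace 𝕏]
    (Pr : Kernel 𝕏 (ℕ → 𝕏)) (Q : Kernel 𝕏 𝕏) : Prop where
  start : ∀ x : 𝕏, Pr x {ω | ω 0 = x} = 1
  markov : ∀ (x : 𝕏) (n : ℕ) (B : Set (ℕ → 𝕏)), MeasurableSet[pathSigma 𝕏 n] B →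
    ∀ A : Set 𝕏, MeasurableSet A →
      Pr x (B ∩ {ω | ω (n + 1) ∈ A}) = ∫⁻ ω in B, Q (ω n) A ∂(Pr x)

/-- The first hitting time `ρ(x,S) = inf {t ≥ 1 : X_t ∈ S}` along the path `ω`
(equal to `⊤` if `S` is never reached at a time `≥ 1`). -/
def hitTime {𝕏 : Type*} (S : Set 𝕏) (ω : ℕ → 𝕏) : ℕ∞ :=
  sInf {n : ℕ∞ | ∃ t : ℕ, n = (t : ℕ∞) ∧ 1 ≤ t ∧ ω t ∈ S}

/-- The discounted payoff `δ(ρ(x,S)) f(X_{ρ(x,S)})` collected along the path `ω`,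
with the convention that it vanishes when `S` is never hit. -/
def stopPayoff {𝕏 : Type*} (δ : ℕ → ℝ) (f : 𝕏 → ℝ) (S : Set 𝕏) (ω : ℕ → 𝕏) : ℝ :=
  if hitTime S ω = ⊤ then 0
  else δ (hitTime S ω).toNat * f (ω (hitTime S ω).toNat)

/-- The objective value `J(x, ρ(x,S)) = 𝔼^x[δ(ρ(x,S)) f(X_{ρ(x,S)})]`. -/
def valJ {𝕏 : Type*} [MeasurableSpace 𝕏] (Pr : Kernel 𝕏 (ℕ → 𝕏)) (δ : ℕ → ℝ) (f : 𝕏 → ℝ)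
    (S : Set 𝕏) (x : 𝕏) : ℝ :=
  ∫ ω, stopPayoff δ f S ω ∂(Pr x)

/-- The operator `Θ(S) = {x ∈ 𝕏 : f(x) ≥ J(x, ρ(x,S))}`. -/
def Θ {𝕏 : Type*} [MeasurableSpace 𝕏] (Pr : Kernel 𝕏 (ℕ → 𝕏)) (δ : ℕ → ℝ) (f : 𝕏 → ℝ)
    (S : Set 𝕏) : Set 𝕏 :=
  {x | valJ Pr δ f S x ≤ f x}

/-- A Borel set `S ⊆ 𝕏` is an equilibrium if `Θ(S) = S`. -/
def IsEquilibrium {𝕏 : Type*} [MeasurableSpace 𝕏] (Pr : Kernel 𝕏 (ℕ → 𝕏)) (δ : ℕ → ℝ)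
    (f : 𝕏 → ℝ) (S : Set 𝕏) : Prop :=
  MeasurableSet S ∧ Θ Pr δ f S = S

/-- The value `V(x,S) = max (f x) (J(x, ρ(x,S)))` associated with an equilibrium `S`. -/
def valV {𝕏 : Type*} [MeasurableSpace 𝕏] (Pr : Kernel 𝕏 (ℕ → 𝕏)) (δ : ℕ → ℝ) (f : 𝕏 → ℝ)
    (S : Set 𝕏) (x : 𝕏) : ℝ :=
  max (f x) (valJ Pr δ f S x)

namespace HT
variable {𝕏 : Type*} [MeasurableSpace 𝕏] {S T : Set 𝕏} {ω : ℕ → 𝕏}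


def shf (t : ℕ) (ω : ℕ → 𝕏) : ℕ → 𝕏 := fun i => ω (t + i)

lemma measurable_shf (t : ℕ) : Measurable (shf (𝕏 := 𝕏) t) :=
  measurable_pi_lambda _ fun i => measurable_pi_apply (t + i)

lemma pathSigma_le_pi (n : ℕ) : pathSigma 𝕏 n ≤ MeasurableSpace.pi := by
  rw [pathSigma]
  refine iSup₂_le fun i _ => ?_
  exact MeasurableSpace.comap_le_iff_le_map.mpr fun s hs => (measurable_pi_apply i) hs

lemma pathSigma_mono {n m : ℕ} (h : n ≤ m) : pathSigma 𝕏 n ≤ pathSigma 𝕏 m := by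
  rw [pathSigma, pathSigma]
  refine iSup₂_le fun i hi => ?_
  refine le_iSup₂ (f := fun i (_ : i ∈ Finset.range (m+1)) =>
    MeasurableSpace.comap (fun ω : ℕ → 𝕏 => ω i) ‹MeasurableSpace 𝕏›) i ?_
  simp only [Finset.mem_range] at hi ⊢; omega

lemma measurableSet_coord {n i : ℕ} (hi : i ≤ n) {A : Set 𝕏} (hA : MeasurableSet A) :
    MeasurableSet[pathSigma 𝕏 n] {ω : ℕ → 𝕏 | ω i ∈ A} := by
  have hle : MeasurableSpace.comap (fun ω : ℕ → 𝕏 => ω i) ‹MeasurableSpace 𝕏› ≤ pathSigma 𝕏 n := by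
    refine le_iSup₂ (f := fun i (_ : i ∈ Finset.range (n+1)) =>
      MeasurableSpace.comap (fun ω : ℕ → 𝕏 => ω i) ‹MeasurableSpace 𝕏›) i ?_
    simp only [Finset.mem_range]; omega
  exact hle _ ⟨A, hA, rfl⟩



lemma hitTime_eq_top_iff : hitTime S ω = ⊤ ↔ ∀ t : ℕ, 1 ≤ t → ω t ∉ S := by
  constructor
  · intro h t ht hmem
    have hmemset : (t : ℕ∞) ∈ {n : ℕ∞ | ∃ t : ℕ, n = (t : ℕ∞) ∧ 1 ≤ t ∧ ω t ∈ S} :=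
      ⟨t, rfl, ht, hmem⟩
    have := sInf_le hmemset
    rw [hitTime] at h
    rw [h] at this
    exact (ENat.coe_ne_top t) (top_le_iff.mp this)
  · intro h
    rw [hitTime, sInf_eq_top]
    rintro a ⟨t, rfl, ht, hmem⟩
    exact absurd hmem (h t ht)

lemma hitTime_eq_coe_iff {t : ℕ} :
    hitTime S ω = (t : ℕ∞) ↔ (1 ≤ t ∧ ω t ∈ S ∧ ∀ u : ℕ, 1 ≤ u → u < t → ω u ∉ S) := by
  constructor
  · intro h
    have hne : {n : ℕ∞ | ∃ t : ℕ, n = (t : ℕ∞) ∧ 1 ≤ t ∧ ω t ∈ S}.Nonempty := by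
      by_contra hcon
      rw [Set.not_nonempty_iff_eq_empty] at hcon
      rw [hitTime, hcon, sInf_empty] at h
      exact (ENat.coe_ne_top t) h.symm
    have hmem := csInf_mem hne
    rw [← hitTime, h] at hmem
    obtain ⟨t', ht', h1, h2⟩ := hmem
    have : t = t' := by exact_mod_cast ht'
    subst this
    refine ⟨h1, h2, fun u hu hut hmem => ?_⟩
    have : hitTime S ω ≤ (u : ℕ∞) := sInf_le ⟨u, rfl, hu, hmem⟩
    rw [h] at this
    have : t ≤ u := by exact_mod_cast this
    omega
  · rintro ⟨h1, h2, h3⟩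
    refine le_antisymm (sInf_le ⟨t, rfl, h1, h2⟩) (le_sInf ?_)
    rintro b ⟨u, rfl, hu, hmem⟩
    have : t ≤ u := by
      by_contra hc
      exact h3 u hu (by omega) hmem
    exact_mod_cast this

lemma hitTime_mem {t : ℕ} (h : hitTime S ω = (t : ℕ∞)) : 1 ≤ t ∧ ω t ∈ S :=
  ⟨(hitTime_eq_coe_iff.mp h).1, (hitTime_eq_coe_iff.mp h).2.1⟩

lemma hitTime_ne_zero : hitTime S ω ≠ (0 : ℕ∞) := by
  intro h
  have := (hitTime_eq_coe_iff (t := 0)).mp (by exact_mod_cast h)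
  omega

/-- if the S-hit happens at `t` and `ω t ∈ T ⊆ S`, the T-hit also happens at `t`. -/
lemma hitTime_subset_eq {t : ℕ} (hTS : T ⊆ S) (h : hitTime S ω = (t : ℕ∞)) (hmem : ω t ∈ T) :
    hitTime T ω = (t : ℕ∞) := by
  obtain ⟨h1, h2, h3⟩ := hitTime_eq_coe_iff.mp h
  exact hitTime_eq_coe_iff.mpr ⟨h1, hmem, fun u hu hut hT => h3 u hu hut (hTS hT)⟩

lemma hitTime_subset_top (hTS : T ⊆ S) (h : hitTime S ω = ⊤) : hitTime T ω = ⊤ :=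
  hitTime_eq_top_iff.mpr fun u hu hT => hitTime_eq_top_iff.mp h u hu (hTS hT)


lemma hitTime_shift_top {t : ℕ} (hTS : T ⊆ S) (h : hitTime S ω = (t : ℕ∞)) (hnm : ω t ∉ T) :
    (hitTime T ω = ⊤ ↔ hitTime T (shf t ω) = ⊤) := by
  rw [hitTime_eq_top_iff, hitTime_eq_top_iff]
  constructor
  · intro hh r hr
    exact hh (t + r) (by omega)
  · intro hh u hu hT
    have htu : (t : ℕ∞) ≤ (u : ℕ∞) := by
      rw [← h]; exact sInf_le ⟨u, rfl, hu, hTS hT⟩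
    have htu' : t ≤ u := by exact_mod_cast htu
    have hne : u ≠ t := fun he => hnm (he ▸ hT)
    have : u = t + (u - t) := by omega
    exact hh (u - t) (by omega) (by rw [shf]; rw [this] at hT; exact hT)

lemma hitTime_shift_coe {t s : ℕ} (hTS : T ⊆ S) (h : hitTime S ω = (t : ℕ∞)) (hnm : ω t ∉ T)
    (hs : hitTime T (shf t ω) = (s : ℕ∞)) : hitTime T ω = ((t + s : ℕ) : ℕ∞) := by
  obtain ⟨h1, h2, h3⟩ := hitTime_eq_coe_iff.mp hs
  refine hitTime_eq_coe_iff.mpr ⟨by omega, h2, fun u hu hut hT => ?_⟩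
  have htu : (t : ℕ∞) ≤ (u : ℕ∞) := by
    rw [← h]; exact sInf_le ⟨u, rfl, hu, hTS hT⟩
  have htu' : t ≤ u := by exact_mod_cast htu
  have hne : u ≠ t := fun he => hnm (he ▸ hT)
  have heq : u = t + (u - t) := by omega
  exact h3 (u - t) (by omega) (by omega) (by rw [shf]; rw [heq] at hT; exact hT)

def hitEvent (S : Set 𝕏) (t : ℕ) : Set (ℕ → 𝕏) := {ω | hitTime S ω = (t : ℕ∞)}

lemma hitEvent_eq {t : ℕ} (ht : 1 ≤ t) :
    hitEvent S t = {ω : ℕ → 𝕏 | ω t ∈ S} ∩ ⋂ (u : ℕ) (_ : 1 ≤ u ∧ u < t), {ω : ℕ → 𝕏 | ω u ∉ S} := by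
  ext ω
  simp only [hitEvent, Set.mem_setOf_eq, Set.mem_inter_iff, Set.mem_iInter, hitTime_eq_coe_iff]
  tauto

lemma hitEvent_zero : hitEvent S 0 = (∅ : Set (ℕ → 𝕏)) := by
  ext ω
  simp only [hitEvent, Set.mem_setOf_eq, Set.mem_empty_iff_false, iff_false]
  intro h
  have := hitTime_eq_coe_iff.mp (show hitTime S ω = ((0:ℕ):ℕ∞) from h)
  omega

lemma measurableSet_hitEvent_pathSigma (hS : MeasurableSet S) (t : ℕ) :
    MeasurableSet[pathSigma 𝕏 t] (hitEvent S t) := by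
  rcases Nat.eq_zero_or_pos t with h | h
  · subst h; rw [hitEvent_zero]; exact @MeasurableSet.empty _ (pathSigma 𝕏 0)
  · rw [hitEvent_eq h]
    refine MeasurableSet.inter (measurableSet_coord le_rfl hS) ?_
    refine MeasurableSet.iInter fun u => MeasurableSet.iInter fun hu => ?_
    exact measurableSet_coord (by omega) hS.compl

lemma measurableSet_hitEvent (hS : MeasurableSet S) (t : ℕ) :
    MeasurableSet (hitEvent S t) :=
  pathSigma_le_pi t _ (measurableSet_hitEvent_pathSigma hS t)

variable (Q : Kernel 𝕏 𝕏) [IsSFiniteKernel Q] (Pr : Kernel 𝕏 (ℕ → 𝕏))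

noncomputable def Hfun : ℕ → (ℕ → Set 𝕏) → 𝕏 → ℝ≥0∞
  | 0, _, _ => 1
  | (j+1), A, y => ∫⁻ z, (A 1).indicator (Hfun j (fun i => A (i+1))) z ∂Q y

lemma measurable_kernel_lint {g : 𝕏 → ℝ≥0∞} (hg : Measurable g) :
    Measurable fun y => ∫⁻ z, g z ∂Q y :=
  Measurable.lintegral_kernel_prod_right' (κ := Q) (hg.comp measurable_snd)

lemma measurable_Hfun : ∀ (j : ℕ) (A : ℕ → Set 𝕏), (∀ i, MeasurableSet (A i)) →
    Measurable (Hfun Q j A)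
  | 0, _, _ => measurable_const
  | (j+1), A, hA => measurable_kernel_lint Q
      (((measurable_Hfun j _ (fun i => hA (i+1)))).indicator (hA 1))

lemma one_step (hchain : IsMarkovChainLaw Pr Q) (x : 𝕏) {n : ℕ} {B : Set (ℕ → 𝕏)}
    (hB : MeasurableSet[pathSigma 𝕏 n] B) {g : 𝕏 → ℝ≥0∞} (hg : Measurable g) :
    ∫⁻ ω in B, g (ω (n+1)) ∂(Pr x) = ∫⁻ ω in B, ∫⁻ y, g y ∂(Q (ω n)) ∂(Pr x) := by
  refine Measurable.ennreal_induction (motive := fun g =>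
    ∫⁻ ω in B, g (ω (n+1)) ∂(Pr x) = ∫⁻ ω in B, ∫⁻ y, g y ∂(Q (ω n)) ∂(Pr x)) ?_ ?_ ?_ hg
  · intro c s hs
    have key : ∀ ω : ℕ → 𝕏, (s.indicator (fun _ => c)) (ω (n+1)) =
        ({ω' : ℕ → 𝕏 | ω' (n+1) ∈ s}).indicator (fun _ => c) ω := by
      intro ω; by_cases h : ω (n+1) ∈ s <;> simp [Set.indicator_apply, h, Set.mem_setOf_eq]
    have hset : MeasurableSet {ω' : ℕ → 𝕏 | ω' (n+1) ∈ s} := (measurable_pi_apply (n+1)) hs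
    calc ∫⁻ ω in B, (s.indicator fun _ => c) (ω (n+1)) ∂(Pr x)
        = ∫⁻ ω in B, ({ω' : ℕ → 𝕏 | ω' (n+1) ∈ s}).indicator (fun _ => c) ω ∂(Pr x) :=
          lintegral_congr key
      _ = c * (Pr x) (B ∩ {ω' | ω' (n+1) ∈ s}) := by
          rw [lintegral_indicator hset, setLIntegral_const, Measure.restrict_apply hset,
            Set.inter_comm]
      _ = c * ∫⁻ ω in B, Q (ω n) s ∂(Pr x) := by rw [hchain.markov x n B hB s hs]
      _ = ∫⁻ ω in B, c * Q (ω n) s ∂(Pr x) :=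
          (lintegral_const_mul c ((Q.measurable_coe hs).comp (measurable_pi_apply n))).symm
      _ = ∫⁻ ω in B, ∫⁻ y, (s.indicator fun _ => c) y ∂(Q (ω n)) ∂(Pr x) := by
          refine lintegral_congr fun ω => ?_
          rw [lintegral_indicator_const hs]
  · intro f g _ hf hgm Pf Pg
    have hf1 : Measurable fun ω : ℕ → 𝕏 => f (ω (n+1)) := hf.comp (measurable_pi_apply _)
    calc ∫⁻ ω in B, (f + g) (ω (n+1)) ∂(Pr x)
        = (∫⁻ ω in B, f (ω (n+1)) ∂(Pr x)) + ∫⁻ ω in B, g (ω (n+1)) ∂(Pr x) := by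
          simp only [Pi.add_apply]; exact lintegral_add_left hf1 _
      _ = (∫⁻ ω in B, ∫⁻ y, f y ∂(Q (ω n)) ∂(Pr x)) +
            ∫⁻ ω in B, ∫⁻ y, g y ∂(Q (ω n)) ∂(Pr x) := by rw [Pf, Pg]
      _ = ∫⁻ ω in B, (∫⁻ y, f y ∂(Q (ω n))) + (∫⁻ y, g y ∂(Q (ω n))) ∂(Pr x) :=
          (lintegral_add_left ((measurable_kernel_lint Q hf).comp (measurable_pi_apply n)) _).symm
      _ = ∫⁻ ω in B, ∫⁻ y, (f + g) y ∂(Q (ω n)) ∂(Pr x) := by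
          refine lintegral_congr fun ω => ?_
          simp only [Pi.add_apply]
          exact (lintegral_add_left hf _).symm
  · intro f hf hmono hP
    calc ∫⁻ ω in B, (fun y => ⨆ k, f k y) (ω (n+1)) ∂(Pr x)
        = ⨆ k, ∫⁻ ω in B, f k (ω (n+1)) ∂(Pr x) :=
          lintegral_iSup (fun k => (hf k).comp (measurable_pi_apply _))
            (fun i j hij ω => hmono hij _)
      _ = ⨆ k, ∫⁻ ω in B, ∫⁻ y, f k y ∂(Q (ω n)) ∂(Pr x) := by
          exact iSup_congr hP
      _ = ∫⁻ ω in B, ⨆ k, ∫⁻ y, f k y ∂(Q (ω n)) ∂(Pr x) := by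
          refine (lintegral_iSup (f := fun k (ω : ℕ → 𝕏) => ∫⁻ y, f k y ∂(Q (ω n))) (fun k => ?_) ?_).symm
          · exact (measurable_kernel_lint Q (hf k)).comp (measurable_pi_apply n)
          · intro i j hij
            intro ω
            exact lintegral_mono fun y => hmono hij y
      _ = ∫⁻ ω in B, ∫⁻ y, (fun y => ⨆ k, f k y) y ∂(Q (ω n)) ∂(Pr x) := by
          refine lintegral_congr fun ω => ?_
          exact (lintegral_iSup hf hmono).symm

lemma cylinder_step (hchain : IsMarkovChainLaw Pr Q) (x : 𝕏) :
    ∀ (j m : ℕ) (B : Set (ℕ → 𝕏)), MeasurableSet[pathSigma 𝕏 m] B →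
      ∀ (A : ℕ → Set 𝕏), (∀ i, MeasurableSet (A i)) →
    (Pr x) (B ∩ {ω | ∀ i, 1 ≤ i → i ≤ j → ω (m + i) ∈ A i}) =
      ∫⁻ ω in B, Hfun Q j A (ω m) ∂(Pr x) := by
  intro j
  induction j with
  | zero =>
    intro m B hB A hA
    have h1 : {ω : ℕ → 𝕏 | ∀ i, 1 ≤ i → i ≤ 0 → ω (m + i) ∈ A i} = Set.univ := by
      ext ω; simp only [Set.mem_setOf_eq, Set.mem_univ, iff_true]; intro i h1 h2; omega
    rw [h1, Set.inter_univ]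
    simp only [Hfun]
    rw [setLIntegral_one]
  | succ j ih =>
    intro m B hB A hA
    have hsplit : {ω : ℕ → 𝕏 | ∀ i, 1 ≤ i → i ≤ j + 1 → ω (m + i) ∈ A i} =
        {ω : ℕ → 𝕏 | ω (m + 1) ∈ A 1} ∩
          {ω : ℕ → 𝕏 | ∀ i, 1 ≤ i → i ≤ j → ω ((m+1) + i) ∈ A (i+1)} := by
      ext ω
      simp only [Set.mem_setOf_eq, Set.mem_inter_iff]
      constructor
      · intro h
        refine ⟨h 1 le_rfl (by omega), fun i h1 h2 => ?_⟩
        have := h (i+1) (by omega) (by omega)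
        rwa [show m + (i+1) = (m+1) + i from by omega] at this
      · rintro ⟨h1, h2⟩ i hi1 hi2
        match i, hi1 with
        | 1, _ => exact h1
        | (k+2), _ =>
          have := h2 (k+1) (by omega) (by omega)
          rwa [show (m+1) + (k+1) = m + (k+2) from by omega] at this
    have hC1 : MeasurableSet[pathSigma 𝕏 (m+1)] {ω : ℕ → 𝕏 | ω (m+1) ∈ A 1} :=
      measurableSet_coord le_rfl (hA 1)
    have hC1m : MeasurableSet {ω : ℕ → 𝕏 | ω (m+1) ∈ A 1} := pathSigma_le_pi _ _ hC1
    have hB' : MeasurableSet[pathSigma 𝕏 (m+1)] (B ∩ {ω : ℕ → 𝕏 | ω (m+1) ∈ A 1}) :=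
      MeasurableSet.inter (pathSigma_mono (Nat.le_succ m) _ hB) hC1
    rw [hsplit, ← Set.inter_assoc,
      ih (m+1) (B ∩ {ω : ℕ → 𝕏 | ω (m+1) ∈ A 1}) hB' (fun i => A (i+1)) (fun i => hA (i+1))]
    have key : ∀ ω : ℕ → 𝕏, ({ω' : ℕ → 𝕏 | ω' (m+1) ∈ A 1}).indicator
          (fun ω' => Hfun Q j (fun i => A (i+1)) (ω' (m+1))) ω =
        ((A 1).indicator (Hfun Q j fun i => A (i+1))) (ω (m+1)) := by
      intro ω; by_cases h : ω (m+1) ∈ A 1 <;> simp [Set.indicator_apply, h, Set.mem_setOf_eq]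
    calc ∫⁻ ω in B ∩ {ω : ℕ → 𝕏 | ω (m+1) ∈ A 1}, Hfun Q j (fun i => A (i+1)) (ω (m+1)) ∂(Pr x)
        = ∫⁻ ω in B, ({ω' : ℕ → 𝕏 | ω' (m+1) ∈ A 1}).indicator
            (fun ω' => Hfun Q j (fun i => A (i+1)) (ω' (m+1))) ω ∂(Pr x) := by
          rw [lintegral_indicator hC1m, Measure.restrict_restrict hC1m, Set.inter_comm]
      _ = ∫⁻ ω in B, ((A 1).indicator (Hfun Q j fun i => A (i+1))) (ω (m+1)) ∂(Pr x) :=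
          lintegral_congr key
      _ = ∫⁻ ω in B, ∫⁻ y, ((A 1).indicator (Hfun Q j fun i => A (i+1))) y ∂(Q (ω m)) ∂(Pr x) :=
          one_step Q Pr hchain x hB
            ((measurable_Hfun Q j _ (fun i => hA (i+1))).indicator (hA 1))
      _ = ∫⁻ ω in B, Hfun Q (j+1) A (ω m) ∂(Pr x) := by
          refine lintegral_congr fun ω => ?_
          simp only [Hfun]


section Start
variable [MeasurableSingletonClass 𝕏] [IsMarkovKernel Pr]

lemma start_ae (hchain : IsMarkovChainLaw Pr Q) (y : 𝕏) : ∀ᵐ ω ∂(Pr y), ω 0 = y := by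
  have hm : MeasurableSet {ω : ℕ → 𝕏 | ω 0 = y} := by
    have he : {ω : ℕ → 𝕏 | ω 0 = y} = (fun ω : ℕ → 𝕏 => ω 0) ⁻¹' {y} := rfl
    rw [he]; exact measurable_pi_apply 0 (measurableSet_singleton y)
  rw [ae_iff]
  have : {ω : ℕ → 𝕏 | ¬ ω 0 = y} = {ω : ℕ → 𝕏 | ω 0 = y}ᶜ := rfl
  rw [this, measure_compl hm (measure_ne_top _ _), hchain.start y]
  simp

lemma kernel_cyl (hchain : IsMarkovChainLaw Pr Q) (y : 𝕏) (j : ℕ) (A : ℕ → Set 𝕏)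
    (hA : ∀ i, MeasurableSet (A i)) :
    (Pr y) {η | ∀ i, 1 ≤ i → i ≤ j → η i ∈ A i} = Hfun Q j A y := by
  have h := cylinder_step Q Pr hchain y j 0 Set.univ (@MeasurableSet.univ _ (pathSigma 𝕏 0)) A hA
  simp only [Set.univ_inter, Measure.restrict_univ, Nat.zero_add] at h
  rw [h]
  have hae := start_ae Q Pr hchain y
  calc ∫⁻ ω, Hfun Q j A (ω 0) ∂(Pr y)
      = ∫⁻ _ω, Hfun Q j A y ∂(Pr y) := lintegral_congr_ae (hae.mono fun ω hω => by show Hfun Q j A (ω 0) = Hfun Q j A y; rw [hω])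
    _ = Hfun Q j A y := by simp

lemma kernel_cyl_full (hchain : IsMarkovChainLaw Pr Q) (y : 𝕏) (j : ℕ) (A : ℕ → Set 𝕏)
    (hA : ∀ i, MeasurableSet (A i)) :
    (Pr y) {η | ∀ i, i ≤ j → η i ∈ A i} = (A 0).indicator (Hfun Q j A) y := by
  have hsplit : {η : ℕ → 𝕏 | ∀ i, i ≤ j → η i ∈ A i} =
      {η : ℕ → 𝕏 | η 0 ∈ A 0} ∩ {η : ℕ → 𝕏 | ∀ i, 1 ≤ i → i ≤ j → η i ∈ A i} := by
    ext η; simp only [Set.mem_setOf_eq, Set.mem_inter_iff]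
    constructor
    · intro h; exact ⟨h 0 (by omega), fun i _ h2 => h i h2⟩
    · rintro ⟨h0, h⟩ i hij
      rcases Nat.eq_zero_or_pos i with rfl | hi
      · exact h0
      · exact h i hi hij
  have hzero : (Pr y) {η : ℕ → 𝕏 | ¬ η 0 = y} = 0 := by
    have := start_ae Q Pr hchain y
    rwa [ae_iff] at this
  rw [hsplit]
  by_cases hy : y ∈ A 0
  · rw [Set.indicator_of_mem hy]
    have hkey : (Pr y) ({η : ℕ → 𝕏 | η 0 ∈ A 0} ∩ {η : ℕ → 𝕏 | ∀ i, 1 ≤ i → i ≤ j → η i ∈ A i}) =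
        (Pr y) {η : ℕ → 𝕏 | ∀ i, 1 ≤ i → i ≤ j → η i ∈ A i} := by
      refine le_antisymm (measure_mono Set.inter_subset_right) ?_
      calc (Pr y) {η : ℕ → 𝕏 | ∀ i, 1 ≤ i → i ≤ j → η i ∈ A i}
          ≤ (Pr y) (({η : ℕ → 𝕏 | η 0 ∈ A 0} ∩ {η : ℕ → 𝕏 | ∀ i, 1 ≤ i → i ≤ j → η i ∈ A i}) ∪
              {η : ℕ → 𝕏 | ¬ η 0 = y}) := by
            refine measure_mono fun η hη => ?_
            by_cases h0 : η 0 = y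
            · exact Or.inl ⟨by show η 0 ∈ A 0; rw [h0]; exact hy, hη⟩
            · exact Or.inr h0
        _ ≤ (Pr y) ({η : ℕ → 𝕏 | η 0 ∈ A 0} ∩ {η : ℕ → 𝕏 | ∀ i, 1 ≤ i → i ≤ j → η i ∈ A i}) +
              (Pr y) {η : ℕ → 𝕏 | ¬ η 0 = y} := measure_union_le _ _
        _ = (Pr y) ({η : ℕ → 𝕏 | η 0 ∈ A 0} ∩ {η : ℕ → 𝕏 | ∀ i, 1 ≤ i → i ≤ j → η i ∈ A i}) := by
            rw [hzero, add_zero]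
    rw [hkey, kernel_cyl Q Pr hchain y j A hA]
  · rw [Set.indicator_of_notMem hy]
    refine measure_mono_null (fun η hη => ?_) hzero
    intro h0
    exact hy (h0 ▸ hη.1)

end Start

def cylClass (𝕏 : Type*) [MeasurableSpace 𝕏] : Set (Set (ℕ → 𝕏)) :=
  {C | ∃ (j : ℕ) (A : ℕ → Set 𝕏), (∀ i, MeasurableSet (A i)) ∧ C = {ω | ∀ i, i ≤ j → ω i ∈ A i}}

lemma isPiSystem_cylClass : IsPiSystem (cylClass 𝕏) := by
  rintro C1 ⟨j1, A1, hA1, rfl⟩ C2 ⟨j2, A2, hA2, rfl⟩ -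
  refine ⟨max j1 j2, fun i => (if i ≤ j1 then A1 i else Set.univ) ∩
    (if i ≤ j2 then A2 i else Set.univ), fun i => ?_, ?_⟩
  · refine MeasurableSet.inter ?_ ?_ <;> split_ifs <;>
      first | exact hA1 i | exact hA2 i | exact MeasurableSet.univ
  · ext ω
    simp only [Set.mem_inter_iff, Set.mem_setOf_eq]
    constructor
    · rintro ⟨h1, h2⟩ i _
      constructor
      · split_ifs with h
        · exact h1 i h
        · trivial
      · split_ifs with h
        · exact h2 i h
        · trivial
    · intro h
      constructor
      · intro i hi
        have := (h i (le_trans hi (le_max_left _ _))).1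
        rwa [if_pos hi] at this
      · intro i hi
        have := (h i (le_trans hi (le_max_right _ _))).2
        rwa [if_pos hi] at this

lemma generateFrom_cylClass :
    (MeasurableSpace.pi : MeasurableSpace (ℕ → 𝕏)) = MeasurableSpace.generateFrom (cylClass 𝕏) := by
  refine le_antisymm ?_ ?_
  · refine iSup_le fun i => ?_
    rw [MeasurableSpace.le_def]
    rintro s ⟨A, hA, rfl⟩
    refine MeasurableSpace.measurableSet_generateFrom ?_
    refine ⟨i, fun k => if k = i then A else Set.univ, fun k => ?_, ?_⟩
    · dsimp only
      split_ifs
      · exact hA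
      · exact MeasurableSet.univ
    · ext ω
      simp only [Set.mem_preimage, Set.mem_setOf_eq]
      constructor
      · intro h k _
        split_ifs with hk
        · rwa [hk]
        · trivial
      · intro h
        have := h i le_rfl
        rwa [if_pos rfl] at this
  · refine MeasurableSpace.generateFrom_le ?_
    rintro C ⟨j, A, hA, rfl⟩
    have : {ω : ℕ → 𝕏 | ∀ i, i ≤ j → ω i ∈ A i} = ⋂ (i : ℕ) (_ : i ≤ j), {ω : ℕ → 𝕏 | ω i ∈ A i} := by
      ext ω; simp [Set.mem_iInter]
    rw [this]
    exact MeasurableSet.iInter fun i => MeasurableSet.iInter fun _ =>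
      (measurable_pi_apply i) (hA i)

section Shift
variable [MeasurableSingletonClass 𝕏] [IsMarkovKernel Pr]

lemma markov_shift (hchain : IsMarkovChainLaw Pr Q) (x : 𝕏) {m : ℕ} {B : Set (ℕ → 𝕏)}
    (hB : MeasurableSet[pathSigma 𝕏 m] B) {F : (ℕ → 𝕏) → ℝ≥0∞} (hF : Measurable F) :
    ∫⁻ ω in B, F (shf m ω) ∂(Pr x) = ∫⁻ ω in B, (∫⁻ η, F η ∂(Pr (ω m))) ∂(Pr x) := by
  have hBm : MeasurableSet B := pathSigma_le_pi m _ hB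
  have hmap : Measurable (fun ω : ℕ → 𝕏 => Pr (ω m)) := Pr.measurable.comp (measurable_pi_apply m)
  have hν : ((Pr x).restrict B).map (shf m) = ((Pr x).restrict B).bind (fun ω => Pr (ω m)) := by
    haveI : IsFiniteMeasure (((Pr x).restrict B).map (shf m)) :=
      Measure.isFiniteMeasure_map _ _
    refine ext_of_generate_finite (cylClass 𝕏) generateFrom_cylClass isPiSystem_cylClass ?_ ?_
    · rintro C ⟨j, A, hA, rfl⟩
      have hCm : MeasurableSet {ω : ℕ → 𝕏 | ∀ i, i ≤ j → ω i ∈ A i} := by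
        have : {ω : ℕ → 𝕏 | ∀ i, i ≤ j → ω i ∈ A i} =
            ⋂ (i : ℕ) (_ : i ≤ j), {ω : ℕ → 𝕏 | ω i ∈ A i} := by
          ext ω; simp [Set.mem_iInter]
        rw [this]
        exact MeasurableSet.iInter fun i => MeasurableSet.iInter fun _ =>
          (measurable_pi_apply i) (hA i)
      rw [Measure.map_apply (measurable_shf m) hCm, Measure.bind_apply hCm hmap.aemeasurable]
      have hpre : shf m ⁻¹' {ω : ℕ → 𝕏 | ∀ i, i ≤ j → ω i ∈ A i} =
          {ω : ℕ → 𝕏 | ω m ∈ A 0} ∩ {ω : ℕ → 𝕏 | ∀ i, 1 ≤ i → i ≤ j → ω (m + i) ∈ A i} := by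
        ext ω
        simp only [Set.mem_preimage, Set.mem_setOf_eq, Set.mem_inter_iff, shf]
        constructor
        · intro h
          exact ⟨h 0 (by omega), fun i _ h2 => h i h2⟩
        · rintro ⟨h0, h⟩ i hij
          rcases Nat.eq_zero_or_pos i with rfl | hi
          · exact h0
          · exact h i hi hij
      have hD : MeasurableSet[pathSigma 𝕏 m] {ω : ℕ → 𝕏 | ω m ∈ A 0} :=
        measurableSet_coord le_rfl (hA 0)
      have hDm : MeasurableSet {ω : ℕ → 𝕏 | ω m ∈ A 0} := pathSigma_le_pi _ _ hD
      calc ((Pr x).restrict B) (shf m ⁻¹' {ω : ℕ → 𝕏 | ∀ i, i ≤ j → ω i ∈ A i})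
          = (Pr x) ((B ∩ {ω : ℕ → 𝕏 | ω m ∈ A 0}) ∩
              {ω : ℕ → 𝕏 | ∀ i, 1 ≤ i → i ≤ j → ω (m + i) ∈ A i}) := by
            rw [Measure.restrict_apply ((measurable_shf m) hCm), hpre]
            congr 1
            ext ω; simp only [Set.mem_inter_iff, Set.mem_setOf_eq]; tauto
        _ = ∫⁻ ω in B ∩ {ω : ℕ → 𝕏 | ω m ∈ A 0}, Hfun Q j A (ω m) ∂(Pr x) :=
            cylinder_step Q Pr hchain x j m _ (hB.inter hD) A hA
        _ = ∫⁻ ω in B, ({ω' : ℕ → 𝕏 | ω' m ∈ A 0}).indicator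
              (fun ω' => Hfun Q j A (ω' m)) ω ∂(Pr x) := by
            rw [lintegral_indicator hDm, Measure.restrict_restrict hDm, Set.inter_comm]
        _ = ∫⁻ ω, (Pr (ω m)) {η | ∀ i, i ≤ j → η i ∈ A i} ∂((Pr x).restrict B) := by
            refine lintegral_congr fun ω => ?_
            rw [kernel_cyl_full Q Pr hchain (ω m) j A hA]
            by_cases h : ω m ∈ A 0 <;> simp [Set.indicator_apply, h]
    · rw [Measure.map_apply (measurable_shf m) MeasurableSet.univ,
        Measure.bind_apply MeasurableSet.univ hmap.aemeasurable]
      simp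
  calc ∫⁻ ω in B, F (shf m ω) ∂(Pr x)
      = ∫⁻ η, F η ∂(((Pr x).restrict B).map (shf m)) := (lintegral_map hF (measurable_shf m)).symm
    _ = ∫⁻ η, F η ∂(((Pr x).restrict B).bind fun ω => Pr (ω m)) := by rw [hν]
    _ = ∫⁻ ω in B, ∫⁻ η, F η ∂(Pr (ω m)) ∂(Pr x) := Measure.lintegral_bind hmap.aemeasurable hF.aemeasurable

end Shift


section Pay
variable (δ : ℕ → ℝ) (f : 𝕏 → ℝ)

/-- ennreal version of the stopped payoff with elapsed-time shift `n`. -/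
noncomputable def payNN (S : Set 𝕏) (n : ℕ) (ω : ℕ → 𝕏) : ℝ≥0∞ :=
  if hitTime S ω = ⊤ then 0
  else ENNReal.ofReal (δ (n + (hitTime S ω).toNat) * f (ω (hitTime S ω).toNat))

variable {δ f}

lemma payNN_eq_tsum {S T : Set 𝕏} (hTS : T ⊆ S) (n : ℕ) (ω : ℕ → 𝕏) :
    payNN δ f T n ω = ∑' t : ℕ, (hitEvent S t).indicator (payNN δ f T n) ω := by
  cases ht : hitTime S ω with
  | top =>
    have hT : hitTime T ω = ⊤ := hitTime_subset_top hTS ht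
    have h0 : ∀ t : ℕ, (hitEvent S t).indicator (payNN δ f T n) ω = 0 := by
      intro t
      refine Set.indicator_of_notMem (fun hm => ?_) _
      have hm' : hitTime S ω = (t : ℕ∞) := hm
      rw [ht] at hm'
      exact (ENat.coe_ne_top t) hm'.symm
    simp only [h0, tsum_zero]
    rw [payNN, if_pos hT]
  | coe t₀ =>
    rw [tsum_eq_single t₀ ?_]
    · exact (Set.indicator_of_mem (show ω ∈ hitEvent S t₀ from ht) _).symm
    · intro t ht'
      refine Set.indicator_of_notMem (fun hm => ?_) _
      have hm' : hitTime S ω = (t : ℕ∞) := hm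
      rw [ht] at hm'
      exact ht' (by exact_mod_cast hm'.symm)

lemma payNN_eq_tsum_self {S : Set 𝕏} (n : ℕ) (ω : ℕ → 𝕏) :
    payNN δ f S n ω = ∑' t : ℕ,
      (hitEvent S t).indicator (fun ω' => ENNReal.ofReal (δ (n + t) * f (ω' t))) ω := by
  cases ht : hitTime S ω with
  | top =>
    have h0 : ∀ t : ℕ, (hitEvent S t).indicator
        (fun ω' => ENNReal.ofReal (δ (n + t) * f (ω' t))) ω = 0 := by
      intro t
      refine Set.indicator_of_notMem (fun hm => ?_) _
      have hm' : hitTime S ω = (t : ℕ∞) := hm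
      rw [ht] at hm'
      exact (ENat.coe_ne_top t) hm'.symm
    simp only [h0, tsum_zero]
    rw [payNN, if_pos ht]
  | coe t₀ =>
    rw [tsum_eq_single t₀ ?_]
    · rw [Set.indicator_of_mem (show ω ∈ hitEvent S t₀ from ht) _]
      rw [payNN, if_neg (by rw [ht]; exact ENat.coe_ne_top t₀)]
      rw [ht]
      simp
    · intro t ht'
      refine Set.indicator_of_notMem (fun hm => ?_) _
      have hm' : hitTime S ω = (t : ℕ∞) := hm
      rw [ht] at hm'
      exact ht' (by exact_mod_cast hm'.symm)

lemma measurable_payNN {S : Set 𝕏} (hS : MeasurableSet S) (hf : Measurable f) (n : ℕ) :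
    Measurable (payNN δ f S n) := by
  have he : payNN δ f S n = fun ω => ∑' t : ℕ,
      (hitEvent S t).indicator (fun ω' => ENNReal.ofReal (δ (n + t) * f (ω' t))) ω :=
    funext fun ω => payNN_eq_tsum_self n ω
  rw [he]
  refine Measurable.ennreal_tsum fun t => Measurable.indicator ?_ (measurableSet_hitEvent hS t)
  exact ENNReal.measurable_ofReal.comp ((hf.comp (measurable_pi_apply t)).const_mul _)

lemma payNN_le {S : Set 𝕏} {C : ℝ} (hδa : Antitone δ) (hδ0 : ∀ k, 0 ≤ δ k)
    (hf0 : ∀ y, 0 ≤ f y) (hfC : ∀ y, f y ≤ C) (n : ℕ) (ω : ℕ → 𝕏) :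
    payNN δ f S n ω ≤ ENNReal.ofReal (δ n * C) := by
  rw [payNN]
  split_ifs with h
  · exact bot_le
  · refine ENNReal.ofReal_le_ofReal ?_
    exact mul_le_mul (hδa (Nat.le_add_right n _)) (hfC _) (hf0 _) (hδ0 n)

end Pay

section Value
variable (Pr : Kernel 𝕏 (ℕ → 𝕏)) (δ : ℕ → ℝ) (f : 𝕏 → ℝ)

noncomputable def Lfun (S : Set 𝕏) (n : ℕ) (x : 𝕏) : ℝ≥0∞ :=
  ∫⁻ ω, payNN δ f S n ω ∂(Pr x)

variable {Pr δ f}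
variable [IsSFiniteKernel Pr]

lemma measurable_Lfun {S : Set 𝕏} (hS : MeasurableSet S) (hf : Measurable f) (n : ℕ) :
    Measurable (Lfun Pr δ f S n) :=
  Measurable.lintegral_kernel_prod_right' (κ := Pr)
    ((measurable_payNN hS hf n).comp measurable_snd)

lemma Lfun_le [IsMarkovKernel Pr] {S : Set 𝕏} {C : ℝ} (hδa : Antitone δ) (hδ0 : ∀ k, 0 ≤ δ k)
    (hf0 : ∀ y, 0 ≤ f y) (hfC : ∀ y, f y ≤ C) (n : ℕ) (x : 𝕏) :
    Lfun Pr δ f S n x ≤ ENNReal.ofReal (δ n * C) := by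
  rw [Lfun]
  calc ∫⁻ ω, payNN δ f S n ω ∂(Pr x) ≤ ∫⁻ _ω, ENNReal.ofReal (δ n * C) ∂(Pr x) :=
        lintegral_mono (payNN_le hδa hδ0 hf0 hfC n)
    _ = ENNReal.ofReal (δ n * C) := by simp

lemma stopPayoff_eq_toReal {S : Set 𝕏} (hδ0 : ∀ k, 0 ≤ δ k) (hf0 : ∀ y, 0 ≤ f y) (ω : ℕ → 𝕏) :
    stopPayoff δ f S ω = (payNN δ f S 0 ω).toReal := by
  rw [stopPayoff, payNN]
  split_ifs with h
  · simp
  · rw [ENNReal.toReal_ofReal (mul_nonneg (hδ0 _) (hf0 _)), Nat.zero_add]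

lemma valJ_eq [IsMarkovKernel Pr] {S : Set 𝕏} (hS : MeasurableSet S) (hf : Measurable f)
    (hδ0 : ∀ k, 0 ≤ δ k) (hf0 : ∀ y, 0 ≤ f y) (x : 𝕏) :
    valJ Pr δ f S x = (Lfun Pr δ f S 0 x).toReal := by
  rw [valJ, Lfun]
  have he : ∀ ω : ℕ → 𝕏, stopPayoff δ f S ω = (payNN δ f S 0 ω).toReal :=
    stopPayoff_eq_toReal hδ0 hf0
  simp_rw [he]
  refine integral_toReal ((measurable_payNN hS hf 0).aemeasurable) ?_
  refine Filter.Eventually.of_forall fun ω => ?_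
  rw [payNN]
  split_ifs with h
  · simp
  · exact ENNReal.ofReal_lt_top

lemma Lfun_DI [IsMarkovKernel Pr] {S : Set 𝕏}
    (hDI : ∀ i j : ℕ, δ i * δ j ≤ δ (i + j)) (hδ0 : ∀ k, 0 ≤ δ k) (hf0 : ∀ y, 0 ≤ f y)
    (m : ℕ) (y : 𝕏) :
    ENNReal.ofReal (δ m) * Lfun Pr δ f S 0 y ≤ Lfun Pr δ f S m y := by
  rw [Lfun, Lfun, ← lintegral_const_mul' _ _ ENNReal.ofReal_ne_top]
  refine lintegral_mono fun ω => ?_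
  rw [payNN, payNN]
  split_ifs with h
  · simp
  · rw [← ENNReal.ofReal_mul (hδ0 m)]
    refine ENNReal.ofReal_le_ofReal ?_
    rw [Nat.zero_add, ← mul_assoc]
    exact mul_le_mul_of_nonneg_right (hDI m _) (hf0 _)

end Value

section Main
variable (Q : Kernel 𝕏 𝕏) [IsSFiniteKernel Q] (Pr : Kernel 𝕏 (ℕ → 𝕏))
variable {δ : ℕ → ℝ} {f : 𝕏 → ℝ}
variable [MeasurableSingletonClass 𝕏] [IsMarkovKernel Pr]

lemma ENat_exists_coe {x : ℕ∞} (hx : x ≠ ⊤) : ∃ s : ℕ, x = (s : ℕ∞) := by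
  lift x to ℕ using hx
  exact ⟨x, rfl⟩

lemma payNN_shift {S T : Set 𝕏} (hTS : T ⊆ S) {t : ℕ} {ω : ℕ → 𝕏}
    (ht : hitTime S ω = (t : ℕ∞)) (hnm : ω t ∉ T) (n : ℕ) :
    payNN δ f T n ω = payNN δ f T (n + t) (shf t ω) := by
  by_cases htop : hitTime T (shf t ω) = ⊤
  · have hTtop : hitTime T ω = ⊤ := (hitTime_shift_top hTS ht hnm).mpr htop
    rw [payNN, if_pos hTtop, payNN, if_pos htop]
  · obtain ⟨s, hs⟩ := ENat_exists_coe htop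
    have hTeq : hitTime T ω = ((t + s : ℕ) : ℕ∞) := hitTime_shift_coe hTS ht hnm hs
    rw [payNN, if_neg (by rw [hTeq]; exact ENat.coe_ne_top _),
      payNN, if_neg (by rw [hs]; exact ENat.coe_ne_top _), hTeq, hs]
    simp only [ENat.toNat_coe]
    have harg : shf t ω s = ω (t + s) := rfl
    rw [harg, show n + (t + s) = n + t + s from by omega]

variable {Q Pr}

lemma Lfun_self_decomp {S : Set 𝕏} (hS : MeasurableSet S) (hf : Measurable f)
    (n : ℕ) (x : 𝕏) :
    Lfun Pr δ f S n x =
      ∑' t : ℕ, ∫⁻ ω in hitEvent S t, ENNReal.ofReal (δ (n + t) * f (ω t)) ∂(Pr x) := by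
  rw [Lfun]
  calc ∫⁻ ω, payNN δ f S n ω ∂(Pr x)
      = ∫⁻ ω, ∑' t : ℕ, (hitEvent S t).indicator
          (fun ω' => ENNReal.ofReal (δ (n + t) * f (ω' t))) ω ∂(Pr x) :=
        lintegral_congr (payNN_eq_tsum_self n)
    _ = ∑' t : ℕ, ∫⁻ ω, (hitEvent S t).indicator
          (fun ω' => ENNReal.ofReal (δ (n + t) * f (ω' t))) ω ∂(Pr x) :=
        lintegral_tsum fun t => (Measurable.indicator
          (ENNReal.measurable_ofReal.comp ((hf.comp (measurable_pi_apply t)).const_mul _))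
          (measurableSet_hitEvent hS t)).aemeasurable
    _ = ∑' t : ℕ, ∫⁻ ω in hitEvent S t, ENNReal.ofReal (δ (n + t) * f (ω t)) ∂(Pr x) :=
        tsum_congr fun t => lintegral_indicator (measurableSet_hitEvent hS t) _

lemma restrict_inter_aux {E D : Set (ℕ → 𝕏)} (hD : MeasurableSet D) (μ : Measure (ℕ → 𝕏)) :
    μ.restrict (E ∩ D) = (μ.restrict E).restrict D := by
  rw [Measure.restrict_restrict hD, Set.inter_comm]

lemma Lfun_decomp (hchain : IsMarkovChainLaw Pr Q) {S T : Set 𝕏}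
    (hTS : T ⊆ S) (hS : MeasurableSet S) (hT : MeasurableSet T) (hf : Measurable f)
    (n : ℕ) (x : 𝕏) :
    Lfun Pr δ f T n x =
      ∑' t : ℕ,
        ((∫⁻ ω in hitEvent S t ∩ {ω' : ℕ → 𝕏 | ω' t ∈ T},
            ENNReal.ofReal (δ (n + t) * f (ω t)) ∂(Pr x)) +
         ∫⁻ ω in hitEvent S t ∩ {ω' : ℕ → 𝕏 | ω' t ∈ T}ᶜ,
            Lfun Pr δ f T (n + t) (ω t) ∂(Pr x)) := by
  have hTset : ∀ t : ℕ, MeasurableSet {ω' : ℕ → 𝕏 | ω' t ∈ T} :=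
    fun t => (measurable_pi_apply t) hT
  rw [Lfun]
  calc ∫⁻ ω, payNN δ f T n ω ∂(Pr x)
      = ∫⁻ ω, ∑' t : ℕ, (hitEvent S t).indicator (payNN δ f T n) ω ∂(Pr x) :=
        lintegral_congr (payNN_eq_tsum hTS n)
    _ = ∑' t : ℕ, ∫⁻ ω in hitEvent S t, payNN δ f T n ω ∂(Pr x) := by
        rw [lintegral_tsum fun t => ((measurable_payNN hT hf n).indicator
          (measurableSet_hitEvent hS t)).aemeasurable]
        exact tsum_congr fun t => lintegral_indicator (measurableSet_hitEvent hS t) _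
    _ = ∑' t : ℕ,
        ((∫⁻ ω in hitEvent S t ∩ {ω' : ℕ → 𝕏 | ω' t ∈ T},
            ENNReal.ofReal (δ (n + t) * f (ω t)) ∂(Pr x)) +
         ∫⁻ ω in hitEvent S t ∩ {ω' : ℕ → 𝕏 | ω' t ∈ T}ᶜ,
            Lfun Pr δ f T (n + t) (ω t) ∂(Pr x)) := by
        refine tsum_congr fun t => ?_
        have hsplit : ∫⁻ ω in hitEvent S t, payNN δ f T n ω ∂(Pr x) =
            (∫⁻ ω in hitEvent S t ∩ {ω' : ℕ → 𝕏 | ω' t ∈ T}, payNN δ f T n ω ∂(Pr x)) +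
            ∫⁻ ω in hitEvent S t ∩ {ω' : ℕ → 𝕏 | ω' t ∈ T}ᶜ, payNN δ f T n ω ∂(Pr x) := by
          rw [restrict_inter_aux (hTset t) (Pr x), restrict_inter_aux (hTset t).compl (Pr x),
            lintegral_add_compl _ (hTset t)]
        rw [hsplit]
        congr 1
        · refine setLIntegral_congr_fun ((measurableSet_hitEvent hS t).inter (hTset t)) ?_
          refine fun ω hω => ?_
          have hteq : hitTime T ω = (t : ℕ∞) := hitTime_subset_eq hTS hω.1 hω.2
          rw [payNN, if_neg (by rw [hteq]; exact ENat.coe_ne_top _), hteq]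
          simp
        · have hBt : MeasurableSet[pathSigma 𝕏 t]
              (hitEvent S t ∩ {ω' : ℕ → 𝕏 | ω' t ∈ T}ᶜ) :=
            (measurableSet_hitEvent_pathSigma hS t).inter (measurableSet_coord le_rfl hT).compl
          calc ∫⁻ ω in hitEvent S t ∩ {ω' : ℕ → 𝕏 | ω' t ∈ T}ᶜ, payNN δ f T n ω ∂(Pr x)
              = ∫⁻ ω in hitEvent S t ∩ {ω' : ℕ → 𝕏 | ω' t ∈ T}ᶜ,
                  payNN δ f T (n + t) (shf t ω) ∂(Pr x) := by
                refine setLIntegral_congr_fun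
                  ((measurableSet_hitEvent hS t).inter (hTset t).compl) ?_
                exact fun ω hω => payNN_shift hTS hω.1 hω.2 n
            _ = ∫⁻ ω in hitEvent S t ∩ {ω' : ℕ → 𝕏 | ω' t ∈ T}ᶜ,
                  ∫⁻ η, payNN δ f T (n + t) η ∂(Pr (ω t)) ∂(Pr x) :=
                markov_shift Q Pr hchain x hBt (measurable_payNN hT hf (n + t))
            _ = ∫⁻ ω in hitEvent S t ∩ {ω' : ℕ → 𝕏 | ω' t ∈ T}ᶜ,
                  Lfun Pr δ f T (n + t) (ω t) ∂(Pr x) := rfl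

lemma Lfun_induct (hchain : IsMarkovChainLaw Pr Q) {S T : Set 𝕏} {C : ℝ}
    (hTS : T ⊆ S) (hS : MeasurableSet S) (hT : MeasurableSet T) (hf : Measurable f)
    (hf0 : ∀ y, 0 ≤ f y) (hfC : ∀ y, f y ≤ C) (hC0 : 0 ≤ C)
    (hδ0 : ∀ k, 0 ≤ δ k) (hδa : Antitone δ)
    (hDI : ∀ i j : ℕ, δ i * δ j ≤ δ (i + j))
    (hkey : ∀ y, y ∈ S → y ∉ T → ENNReal.ofReal (f y) ≤ Lfun Pr δ f S 0 y) :
    ∀ k n x, Lfun Pr δ f S n x ≤ Lfun Pr δ f T n x + ENNReal.ofReal (δ (n + k) * C) := by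
  intro k
  induction k with
  | zero =>
    intro n x
    refine le_trans (Lfun_le hδa hδ0 hf0 hfC n x) ?_
    rw [Nat.add_zero]
    exact le_add_self
  | succ k ih =>
    intro n x
    have hTset : ∀ t : ℕ, MeasurableSet {ω' : ℕ → 𝕏 | ω' t ∈ T} :=
      fun t => (measurable_pi_apply t) hT
    have key : ∀ t : ℕ,
        (∫⁻ ω in hitEvent S t, ENNReal.ofReal (δ (n + t) * f (ω t)) ∂(Pr x)) ≤
          ((∫⁻ ω in hitEvent S t ∩ {ω' : ℕ → 𝕏 | ω' t ∈ T},
              ENNReal.ofReal (δ (n + t) * f (ω t)) ∂(Pr x)) +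
           ∫⁻ ω in hitEvent S t ∩ {ω' : ℕ → 𝕏 | ω' t ∈ T}ᶜ,
              Lfun Pr δ f T (n + t) (ω t) ∂(Pr x)) +
          ENNReal.ofReal (δ (n + 1 + k) * C) *
            (Pr x) (hitEvent S t ∩ {ω' : ℕ → 𝕏 | ω' t ∈ T}ᶜ) := by
      intro t
      rcases Nat.eq_zero_or_pos t with rfl | htpos
      · simp [hitEvent_zero]
      · have hsplit : ∫⁻ ω in hitEvent S t, ENNReal.ofReal (δ (n + t) * f (ω t)) ∂(Pr x) =
            (∫⁻ ω in hitEvent S t ∩ {ω' : ℕ → 𝕏 | ω' t ∈ T},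
                ENNReal.ofReal (δ (n + t) * f (ω t)) ∂(Pr x)) +
            ∫⁻ ω in hitEvent S t ∩ {ω' : ℕ → 𝕏 | ω' t ∈ T}ᶜ,
                ENNReal.ofReal (δ (n + t) * f (ω t)) ∂(Pr x) := by
          rw [restrict_inter_aux (hTset t) (Pr x), restrict_inter_aux (hTset t).compl (Pr x),
            lintegral_add_compl _ (hTset t)]
        rw [hsplit, add_assoc]
        refine add_le_add_right ?_ _
        have hpt : ∀ ω ∈ hitEvent S t ∩ {ω' : ℕ → 𝕏 | ω' t ∈ T}ᶜ,
            ENNReal.ofReal (δ (n + t) * f (ω t)) ≤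
              Lfun Pr δ f T (n + t) (ω t) + ENNReal.ofReal (δ (n + 1 + k) * C) := by
          intro ω hω
          have hmemS : ω t ∈ S := (hitTime_mem hω.1).2
          have hmemT : ω t ∉ T := hω.2
          calc ENNReal.ofReal (δ (n + t) * f (ω t))
              = ENNReal.ofReal (δ (n + t)) * ENNReal.ofReal (f (ω t)) :=
                ENNReal.ofReal_mul (hδ0 _)
            _ ≤ ENNReal.ofReal (δ (n + t)) * Lfun Pr δ f S 0 (ω t) :=
                mul_le_mul_right (hkey _ hmemS hmemT) _
            _ ≤ Lfun Pr δ f S (n + t) (ω t) := Lfun_DI hDI hδ0 hf0 _ _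
            _ ≤ Lfun Pr δ f T (n + t) (ω t) + ENNReal.ofReal (δ (n + t + k) * C) :=
                ih (n + t) (ω t)
            _ ≤ Lfun Pr δ f T (n + t) (ω t) + ENNReal.ofReal (δ (n + 1 + k) * C) := by
                refine add_le_add_right (ENNReal.ofReal_le_ofReal ?_) _
                exact mul_le_mul_of_nonneg_right (hδa (by omega)) hC0
        calc ∫⁻ ω in hitEvent S t ∩ {ω' : ℕ → 𝕏 | ω' t ∈ T}ᶜ,
                ENNReal.ofReal (δ (n + t) * f (ω t)) ∂(Pr x)
            ≤ ∫⁻ ω in hitEvent S t ∩ {ω' : ℕ → 𝕏 | ω' t ∈ T}ᶜ,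
                (Lfun Pr δ f T (n + t) (ω t) + ENNReal.ofReal (δ (n + 1 + k) * C)) ∂(Pr x) :=
              setLIntegral_mono
                (((measurable_Lfun hT hf (n + t)).comp (measurable_pi_apply t)).add_const _) hpt
          _ = (∫⁻ ω in hitEvent S t ∩ {ω' : ℕ → 𝕏 | ω' t ∈ T}ᶜ,
                Lfun Pr δ f T (n + t) (ω t) ∂(Pr x)) +
              ENNReal.ofReal (δ (n + 1 + k) * C) *
                (Pr x) (hitEvent S t ∩ {ω' : ℕ → 𝕏 | ω' t ∈ T}ᶜ) := by
              rw [lintegral_add_right _ measurable_const, setLIntegral_const]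
    have hdisj : Pairwise (Function.onFun Disjoint
        fun t : ℕ => hitEvent S t ∩ {ω' : ℕ → 𝕏 | ω' t ∈ T}ᶜ) := by
      intro a b hab
      rw [Function.onFun, Set.disjoint_left]
      rintro ω ⟨ha, -⟩ ⟨hb, -⟩
      have h1 : hitTime S ω = (a : ℕ∞) := ha
      have h2 : hitTime S ω = (b : ℕ∞) := hb
      rw [h1] at h2
      exact hab (by exact_mod_cast h2)
    calc Lfun Pr δ f S n x
        = ∑' t : ℕ, ∫⁻ ω in hitEvent S t, ENNReal.ofReal (δ (n + t) * f (ω t)) ∂(Pr x) :=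
          Lfun_self_decomp hS hf n x
      _ ≤ ∑' t : ℕ,
          (((∫⁻ ω in hitEvent S t ∩ {ω' : ℕ → 𝕏 | ω' t ∈ T},
              ENNReal.ofReal (δ (n + t) * f (ω t)) ∂(Pr x)) +
            ∫⁻ ω in hitEvent S t ∩ {ω' : ℕ → 𝕏 | ω' t ∈ T}ᶜ,
              Lfun Pr δ f T (n + t) (ω t) ∂(Pr x)) +
           ENNReal.ofReal (δ (n + 1 + k) * C) *
             (Pr x) (hitEvent S t ∩ {ω' : ℕ → 𝕏 | ω' t ∈ T}ᶜ)) := ENNReal.tsum_le_tsum key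
      _ = (∑' t : ℕ,
          ((∫⁻ ω in hitEvent S t ∩ {ω' : ℕ → 𝕏 | ω' t ∈ T},
              ENNReal.ofReal (δ (n + t) * f (ω t)) ∂(Pr x)) +
            ∫⁻ ω in hitEvent S t ∩ {ω' : ℕ → 𝕏 | ω' t ∈ T}ᶜ,
              Lfun Pr δ f T (n + t) (ω t) ∂(Pr x))) +
          ∑' t : ℕ, ENNReal.ofReal (δ (n + 1 + k) * C) *
             (Pr x) (hitEvent S t ∩ {ω' : ℕ → 𝕏 | ω' t ∈ T}ᶜ) := ENNReal.tsum_add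
      _ ≤ Lfun Pr δ f T n x + ENNReal.ofReal (δ (n + (k + 1)) * C) := by
          refine add_le_add (le_of_eq (Lfun_decomp hchain hTS hS hT hf n x).symm) ?_
          rw [ENNReal.tsum_mul_left]
          have hsum : ∑' t : ℕ, (Pr x) (hitEvent S t ∩ {ω' : ℕ → 𝕏 | ω' t ∈ T}ᶜ) ≤ 1 := by
            rw [← measure_iUnion hdisj
              (fun t => (measurableSet_hitEvent hS t).inter (hTset t).compl)]
            exact prob_le_one
          calc ENNReal.ofReal (δ (n + 1 + k) * C) *
                ∑' t : ℕ, (Pr x) (hitEvent S t ∩ {ω' : ℕ → 𝕏 | ω' t ∈ T}ᶜ)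
              ≤ ENNReal.ofReal (δ (n + 1 + k) * C) * 1 := mul_le_mul_right hsum _
            _ = ENNReal.ofReal (δ (n + (k + 1)) * C) := by
                rw [mul_one, show n + 1 + k = n + (k + 1) from by omega]

lemma Lfun_le_Lfun (hchain : IsMarkovChainLaw Pr Q) {S T : Set 𝕏} {C : ℝ}
    (hTS : T ⊆ S) (hS : MeasurableSet S) (hT : MeasurableSet T) (hf : Measurable f)
    (hf0 : ∀ y, 0 ≤ f y) (hfC : ∀ y, f y ≤ C) (hC0 : 0 ≤ C)
    (hδ0 : ∀ k, 0 ≤ δ k) (hδa : Antitone δ) (hδ_lim : Tendsto δ atTop (𝓝 0))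
    (hDI : ∀ i j : ℕ, δ i * δ j ≤ δ (i + j))
    (hkey : ∀ y, y ∈ S → y ∉ T → ENNReal.ofReal (f y) ≤ Lfun Pr δ f S 0 y)
    (n : ℕ) (x : 𝕏) :
    Lfun Pr δ f S n x ≤ Lfun Pr δ f T n x := by
  refine ENNReal.le_of_forall_pos_le_add fun ε hε _hlt => ?_
  have htend : Tendsto (fun k => δ (n + k) * C) atTop (𝓝 0) := by
    have h1 : Tendsto (fun k : ℕ => n + k) atTop atTop :=
      tendsto_atTop_mono (fun k => Nat.le_add_left k n) tendsto_id
    have h2 := (hδ_lim.comp h1).mul_const C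
    simpa using h2
  have hev : ∀ᶠ k in atTop, δ (n + k) * C < (ε : ℝ) :=
    htend.eventually_lt_const (show (0:ℝ) < (ε : ℝ) by exact_mod_cast hε)
  obtain ⟨k, hk⟩ := hev.exists
  calc Lfun Pr δ f S n x
      ≤ Lfun Pr δ f T n x + ENNReal.ofReal (δ (n + k) * C) :=
        Lfun_induct hchain hTS hS hT hf hf0 hfC hC0 hδ0 hδa hDI hkey k n x
    _ ≤ Lfun Pr δ f T n x + (ε : ℝ≥0∞) := by
        refine add_le_add_right ?_ _
        rw [← ENNReal.ofReal_coe_nnreal]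
        exact ENNReal.ofReal_le_ofReal hk.le

end Main

end HT

/-- Under decreasing impatience, if `Θ(S) ⊆ S` for a nonempty Borel set `S`, then
`J(x, ρ(x,S)) ≤ J(x, ρ(x,Θ(S)))` for all `x`; in particular `Θ²(S) ⊆ Θ(S)`. -/
theorem iterate_improves
    {𝕏 : Type*} [TopologicalSpace 𝕏] [PolishSpace 𝕏] [MeasurableSpace 𝕏] [BorelSpace 𝕏]
    (Pr : Kernel 𝕏 (ℕ → 𝕏)) [IsMarkovKernel Pr] (Q : Kernel 𝕏 𝕏) [IsMarkovKernel Q]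
    (hchain : IsMarkovChainLaw Pr Q)
    (f : 𝕏 → ℝ) (hf_meas : Measurable f) (hf_nonneg : ∀ x, 0 ≤ f x)
    (hf_bdd : ∃ C : ℝ, ∀ x, f x ≤ C)
    (δ : ℕ → ℝ) (hδ_mem : ∀ k, δ k ∈ Set.Icc (0 : ℝ) 1) (hδ_anti : StrictAnti δ)
    (hδ_zero : δ 0 = 1) (hδ_lim : Tendsto δ atTop (𝓝 0))
    (hDI : ∀ i j : ℕ, δ i * δ j ≤ δ (i + j))
    (S : Set 𝕏) (hS : MeasurableSet S) (hSne : S.Nonempty) (hΘS : Θ Pr δ f S ⊆ S) :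
    (∀ x : 𝕏, valJ Pr δ f S x ≤ valJ Pr δ f (Θ Pr δ f S) x) ∧
    Θ Pr δ f (Θ Pr δ f S) ⊆ Θ Pr δ f S := by
  classical
  haveI : MeasurableSingletonClass 𝕏 := ⟨fun a => (isClosed_singleton).measurableSet⟩
  obtain ⟨C, hfC⟩ := hf_bdd
  obtain ⟨y0, hy0⟩ := hSne
  have hC0 : 0 ≤ C := le_trans (hf_nonneg y0) (hfC y0)
  have hδ0 : ∀ k, 0 ≤ δ k := fun k => (hδ_mem k).1
  have hδa : Antitone δ := hδ_anti.antitone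
  have hvalJ_eq : ∀ (U : Set 𝕏), MeasurableSet U → ∀ x : 𝕏,
      valJ Pr δ f U x = (HT.Lfun Pr δ f U 0 x).toReal :=
    fun U hU x => HT.valJ_eq hU hf_meas hδ0 hf_nonneg x
  have hLfin : ∀ (U : Set 𝕏) (n : ℕ) (x : 𝕏), HT.Lfun Pr δ f U n x ≠ ⊤ := fun U n x =>
    (lt_of_le_of_lt (HT.Lfun_le hδa hδ0 hf_nonneg hfC n x) ENNReal.ofReal_lt_top).ne
  have hT : MeasurableSet (Θ Pr δ f S) := by
    have he : Θ Pr δ f S = {x : 𝕏 | (HT.Lfun Pr δ f S 0 x).toReal ≤ f x} := by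
      ext z
      simp only [Θ, Set.mem_setOf_eq, hvalJ_eq S hS z]
    rw [he]
    exact measurableSet_le ((HT.measurable_Lfun hS hf_meas 0).ennreal_toReal) hf_meas
  have hkey : ∀ y, y ∈ S → y ∉ Θ Pr δ f S → ENNReal.ofReal (f y) ≤ HT.Lfun Pr δ f S 0 y := by
    intro y _hyS hyT
    have hlt : f y ≤ valJ Pr δ f S y := le_of_lt (lt_of_not_ge hyT)
    calc ENNReal.ofReal (f y) ≤ ENNReal.ofReal (valJ Pr δ f S y) :=
          ENNReal.ofReal_le_ofReal hlt
      _ = HT.Lfun Pr δ f S 0 y := by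
          rw [hvalJ_eq S hS y, ENNReal.ofReal_toReal (hLfin S 0 y)]
  have hmain : ∀ x : 𝕏, valJ Pr δ f S x ≤ valJ Pr δ f (Θ Pr δ f S) x := by
    intro x
    rw [hvalJ_eq S hS x, hvalJ_eq _ hT x]
    refine ENNReal.toReal_mono (hLfin _ 0 x) ?_
    exact HT.Lfun_le_Lfun (Q := Q) hchain hΘS hS hT hf_meas hf_nonneg hfC hC0 hδ0 hδa
      hδ_lim hDI hkey 0 x
  exact ⟨hmain, fun x hx => le_trans (hmain x) hx⟩

end
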